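/- Abstract frame rule: if m soundly abstracts f in A and A captures f, then for any abstraction B, the conjunction m * id (where id is the identity abstract program on X_B, id(b) = b) soundly abstracts f in A * B, and A * B captures f. -/

import Mathlib

namespace HC

open Classical

universe u v w

/-- A heap: a finite partial map from addresses `L` to values `V`. -/
structure Heap (L : Type u) (V : Type v) where
  toFun : L → Option V
  fin : {l | toFun l ≠ none}.Finite

variable {L : Type u} {V : Type v}

/-- Domain of a heap. -/
def Heap.dom (h : Heap L V) : Set L := {l | h.toFun l ≠ none}

/-- Disjointness of heaps. -/
def HDisj (h₁ h₂ : Heap L V) : Prop := Disjoint h₁.dom h₂.dom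

/-- Union of heaps (left-biased; used on disjoint heaps). -/
def hunion (h₁ h₂ : Heap L V) : Heap L V where
  toFun l := (h₁.toFun l).elim (h₂.toFun l) some
  fin := by
    apply (h₁.fin.union h₂.fin).subset
    intro l hl
    simp only [Set.mem_setOf_eq] at hl
    rcases hh : h₁.toFun l with _ | v
    · right; simpa [Heap.dom, hh, Option.elim] using hl
    · left; simp [Heap.dom, hh]

/-- `subheap h₁ h₂`: `h₁` is a subheap of `h₂`. -/
def subheap (h₁ h₂ : Heap L V) : Prop := ∃ k, HDisj h₁ k ∧ hunion h₁ k = h₂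

/-- `hsub k h'` : the subheap of `k` with domain `dom k \ dom h'`. -/
def hsub (k h' : Heap L V) : Heap L V where
  toFun l := (h'.toFun l).elim (k.toFun l) (fun _ => none)
  fin := by
    apply k.fin.subset
    intro l hl
    simp only [Set.mem_setOf_eq] at hl ⊢
    rcases hh : h'.toFun l with _ | v
    · simpa [hh, Option.elim] using hl
    · simp [hh, Option.elim] at hl

/-- Extension `Ψ⁺` of a heap predicate: some subheap satisfies `Ψ`. -/
def extPred (Ψ : Heap L V → Prop) (h : Heap L V) : Prop := ∃ h', subheap h' h ∧ Ψ h'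

/-! ### Concrete programs -/

/-- Sufficient heaps of a program. -/
def suff (f : Heap L V → Set (Heap L V)) : Set (Heap L V) := {h | f h ≠ ∅}

/-- Footprint of a program. -/
def foot (f : Heap L V → Set (Heap L V)) : Set (Heap L V) :=
  suff f ∪ {h | ∀ h', HDisj h h' → hunion h h' ∉ suff f}

/-- Local action: a concrete program is a total function `f : H → 𝒫(H)` acting locally. -/
def LocalAction (f : Heap L V → Set (Heap L V)) : Prop :=
  ∀ h, f h ≠ ∅ → ∀ h', HDisj h h' →
    f (hunion h h') ≠ ∅ ∧ ∀ k ∈ f (hunion h h'), subheap h' k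

/-- The concrete transformer `f̄`. -/
noncomputable def tbar (f : Heap L V → Set (Heap L V)) (C : Set (Heap L V)) :
    Set (Heap L V) :=
  if C ⊆ suff f then ⋃ h ∈ C, f h else ∅

/-- Sequencing `f;g ≜ ḡ ∘ f`. -/
noncomputable def pseq (f g : Heap L V → Set (Heap L V)) : Heap L V → Set (Heap L V) :=
  fun h => tbar g (f h)

/-! ### Abstractions and the abstract domain -/

/-- An abstraction is given by its projection `π : H → X + {✗}`, encoded with `Option`
(`none` is `✗`). -/
def Locality (π : Heap L V → Option X) : Prop :=
  ∀ h h', HDisj h h' → (π h).isSome → π (hunion h h') = π h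

/-- The purview of an abstraction. -/
def purv (π : Heap L V → Option X) : Set (Heap L V) := {h | (π h).isSome}

/-- The abstract domain `𝒜 = X + {⊥, ✗, ✓, ⊤}`. -/
inductive AbsDom (X : Type w) where
  | bot | cross | check | top
  | val (x : X)

/-- The partial order on the abstract domain. -/
def ale {X : Type w} : AbsDom X → AbsDom X → Prop
  | .bot, _ => True
  | _, .top => True
  | .cross, .cross => True
  | .check, .check => True
  | .val _, .check => True
  | .val x, .val y => x = y
  | _, _ => False

/-- The projection of a single heap, viewed in the abstract domain. -/
def liftProj (π : Heap L V → Option X) (h : Heap L V) : AbsDom X :=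
  (π h).elim .cross .val

/-- Abstraction function `α(C) = ⨆_{h ∈ C} π(h)` (the join computed explicitly). -/
noncomputable def alpha (π : Heap L V → Option X) (C : Set (Heap L V)) : AbsDom X :=
  if C = ∅ then .bot
  else if hx : ∃ x, ∀ h ∈ C, π h = some x then .val hx.choose
  else if ∀ h ∈ C, (π h).isSome then .check
  else if ∀ h ∈ C, π h = none then .cross
  else .top

/-- Concretization function `γ(x) = {h | π(h) ≤ x}`. -/
def gamma (π : Heap L V → Option X) (x : AbsDom X) : Set (Heap L V) :=
  {h | ale (liftProj π h) x}

/-! ### Observational equivalence and concrete commutativity -/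

/-- `[Ψ, ∼]` is an observational equivalence: `∼` is an equivalence relation on `H(Ψ⁺)`. -/
def IsObsEq (Ψ : Heap L V → Prop) (sim : Heap L V → Heap L V → Prop) : Prop :=
  (∀ h, extPred Ψ h → sim h h) ∧
  (∀ h h', extPred Ψ h → extPred Ψ h' → sim h h' → sim h' h) ∧
  (∀ a b c, extPred Ψ a → extPred Ψ b → extPred Ψ c → sim a b → sim b c → sim a c)

/-- Concrete commutativity of `f` and `g` under precondition `P` w.r.t. `[Ψ, ∼]`. -/
def CommuteUnder (Ψ : Heap L V → Prop) (sim : Heap L V → Heap L V → Prop)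
    (f g : Heap L V → Set (Heap L V)) (P : Heap L V → Prop) : Prop :=
  ∀ h, P h → pseq f g h ≠ ∅ ∧ pseq g f h ≠ ∅ ∧
    ∃ h', extPred Ψ h' ∧
      ∀ k, (k ∈ pseq f g h ∨ k ∈ pseq g f h) → extPred Ψ k ∧ sim k h'

/-- The equivalence relation `∼_A` induced by an abstraction. -/
def simInd (π : Heap L V → Option X) (h h' : Heap L V) : Prop := π h = π h'

/-- The heap predicate "h is in purview", used in the induced observational equivalence. -/
def purvPred (π : Heap L V → Option X) (h : Heap L V) : Prop := (π h).isSome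

/-- An abstraction captures an observational equivalence. -/
def CapturesEq (π : Heap L V → Option X) (Ψ : Heap L V → Prop)
    (sim : Heap L V → Heap L V → Prop) : Prop :=
  (∀ h, extPred Ψ h → (π h).isSome) ∧
  (∀ h h', Ψ h → Ψ h' → (π h).isSome → π h = π h' → sim h h')

/-! ### Abstract programs and soundness -/

/-- The abstract transformer `m̂` of an abstract program `m : X → 𝒜`. -/
def mhat {X : Type w} (m : X → AbsDom X) : AbsDom X → AbsDom X
  | .bot => .bot
  | .val x => m x
  | _ => .top

/-- `m` soundly abstracts `f` in the abstraction with projection `π`. -/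
def Sound (π : Heap L V → Option X) (m : X → AbsDom X)
    (f : Heap L V → Set (Heap L V)) : Prop :=
  (∀ (C : Set (Heap L V)) (x : AbsDom X),
      ale (alpha π C) x → ale (alpha π (tbar f C)) (mhat m x)) ∧
  (∀ C : Set (Heap L V), (∃ x, alpha π C = .val x) → alpha π (tbar f C) = .bot →
      mhat m (alpha π C) = .bot)

/-- Abstract programs `m` and `n` commute under `Q`. -/
def AbsCommute {X : Type w} (m n : X → AbsDom X) (Q : X → Prop) : Prop :=
  ∀ x, Q x → mhat n (m x) = mhat m (n x) ∧ ∃ y, mhat n (m x) = .val y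

/-- An abstraction captures a concrete program. -/
def CapturesProg (π : Heap L V → Option X) (f : Heap L V → Set (Heap L V)) : Prop :=
  (purv π ⊆ foot f) ∧
  (∀ h ∈ purv π ∩ suff f, ∃ x, alpha π (f h) = .val x) ∧
  (∀ h ∈ purv π ∩ foot f, ∀ h', HDisj h h' →
      alpha π ((fun k => hsub k h') '' f (hunion h h')) = alpha π (f h))

/-! ### Conjunction of abstractions and of abstract programs -/

/-- Projection of the conjunction `A * B`. -/
noncomputable def conjProj (πA : Heap L V → Option X) (πB : Heap L V → Option Y) :
    Heap L V → Option (X × Y) := fun h =>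
  if hc : ∃ p : Heap L V × Heap L V,
      HDisj p.1 p.2 ∧ hunion p.1 p.2 = h ∧ (πA p.1).isSome ∧ (πB p.2).isSome
    then some ((πA hc.choose.1).get hc.choose_spec.2.2.1,
               (πB hc.choose.2).get hc.choose_spec.2.2.2)
    else none

/-- Forget the specific abstract value (used for the join in a compound domain). -/
def toFour {X : Type w} {Z : Type*} : AbsDom X → AbsDom Z
  | .bot => .bot
  | .cross => .cross
  | .top => .top
  | _ => .check

/-- Join in the abstract domain (on the elements arising in program conjunction). -/
def djoin {Z : Type*} : AbsDom Z → AbsDom Z → AbsDom Z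
  | .bot, b => b
  | a, .bot => a
  | .cross, .cross => .cross
  | .check, .check => .check
  | .check, .val _ => .check
  | .val _, .check => .check
  | .val x, .val _ => .val x
  | _, _ => .top

/-- Conjunction `m * n` of abstract programs. -/
def conjProg {X Y : Type*} (m : X → AbsDom X) (n : Y → AbsDom Y) :
    X × Y → AbsDom (X × Y) := fun p =>
  match m p.1, n p.2 with
  | .bot, _ => .bot
  | _, .bot => .bot
  | .val a, .val b => .val (a, b)
  | ma, nb => djoin (toFour ma) (toFour nb)

/-! ### Isomorphism of abstractions -/

/-- `φ` induces an isomorphism between the abstractions with projections `πA`, `πB`. -/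
def Iso (πA : Heap L V → Option X) (πB : Heap L V → Option Y) (φ : X ≃ Y) : Prop :=
  ∀ h, (πA h).map φ = πB h

/-- Extension of `φ : X → Y` to the abstract domains, fixing `⊥, ✗, ✓, ⊤`. -/
def mapAbs {X Y : Type*} (φ : X → Y) : AbsDom X → AbsDom Y
  | .bot => .bot
  | .cross => .cross
  | .check => .check
  | .top => .top
  | .val x => .val (φ x)

end HC

open HC

section Aux
namespace HC

open Classical

universe u v w

variable {L : Type u} {V : Type v} {X : Type w} {Y : Type*}

theorem Heap.ext' {h₁ h₂ : Heap L V} (h : ∀ l, h₁.toFun l = h₂.toFun l) : h₁ = h₂ := by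
  cases h₁; cases h₂
  simp only [Heap.mk.injEq]
  exact funext h

theorem HDisj_iff {a b : Heap L V} :
    HDisj a b ↔ ∀ l, a.toFun l = none ∨ b.toFun l = none := by
  constructor
  · intro hd l
    by_contra hc
    push_neg at hc
    exact Set.disjoint_left.mp hd hc.1 hc.2
  · intro h
    rw [HDisj, Set.disjoint_left]
    intro l hl hl'
    rcases h l with h' | h'
    · exact hl h'
    · exact hl' h'

theorem HDisj.symm' {a b : Heap L V} (h : HDisj a b) : HDisj b a := Disjoint.symm h

theorem hunion_toFun (a b : Heap L V) (l : L) :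
    (hunion a b).toFun l = (a.toFun l).elim (b.toFun l) some := rfl

theorem hunion_assoc (a b c : Heap L V) :
    hunion (hunion a b) c = hunion a (hunion b c) := by
  apply Heap.ext'
  intro l
  simp only [hunion_toFun]
  rcases a.toFun l with _ | v <;> simp

theorem hunion_comm {a b : Heap L V} (hd : HDisj a b) : hunion a b = hunion b a := by
  rw [HDisj_iff] at hd
  apply Heap.ext'
  intro l
  simp only [hunion_toFun]
  rcases hd l with h | h <;> rw [h] <;>
    [rcases hb : b.toFun l with _ | v; rcases ha : a.toFun l with _ | v] <;> simp

theorem dom_hunion (a b : Heap L V) : (hunion a b).dom = a.dom ∪ b.dom := by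
  ext l
  show ¬((a.toFun l).elim (b.toFun l) some = none) ↔ _
  rcases ha : a.toFun l with _ | v <;> simp [Heap.dom, ha]

theorem hdisj_hunion_left {a b c : Heap L V} :
    HDisj (hunion a b) c ↔ HDisj a c ∧ HDisj b c := by
  rw [HDisj, dom_hunion, Set.disjoint_union_left]
  exact Iff.rfl

theorem hdisj_hunion_right {a b c : Heap L V} :
    HDisj a (hunion b c) ↔ HDisj a b ∧ HDisj a c := by
  constructor
  · intro h
    have := hdisj_hunion_left.mp h.symm'
    exact ⟨this.1.symm', this.2.symm'⟩
  · intro h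
    exact (hdisj_hunion_left.mpr ⟨h.1.symm', h.2.symm'⟩).symm'

theorem hsub_toFun (k h : Heap L V) (l : L) :
    (hsub k h).toFun l = (h.toFun l).elim (k.toFun l) (fun _ => none) := rfl

theorem hsub_hunion {a b : Heap L V} (hd : HDisj a b) : hsub (hunion a b) a = b := by
  rw [HDisj_iff] at hd
  apply Heap.ext'
  intro l
  simp only [hsub_toFun, hunion_toFun]
  rcases ha : a.toFun l with _ | v
  · simp
  · rcases hd l with h | h
    · simp [ha] at h
    · simp [h]

theorem hsub_split {b c r : Heap L V} (d1 : HDisj b c) (d2 : HDisj (hunion b c) r) :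
    hsub (hunion (hunion b c) r) c = hunion b r := by
  rw [HDisj_iff] at d1
  have d2' := HDisj_iff.mp d2
  apply Heap.ext'
  intro l
  simp only [hsub_toFun, hunion_toFun]
  rcases hc : c.toFun l with _ | v
  · rcases hb : b.toFun l with _ | w <;> simp
  · have hb : b.toFun l = none := by
      rcases d1 l with h | h
      · exact h
      · simp [hc] at h
    have hr : r.toFun l = none := by
      rcases d2' l with h | h
      · rw [hunion_toFun, hb, hc] at h; simp at h
      · exact h
    simp [hb, hr]

/-! ### ale and alpha lemmas -/

theorem ale_top {z : AbsDom X} : ale z .top := by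
  cases z <;> trivial

theorem bot_ale {z : AbsDom X} : ale .bot z := by
  cases z <;> trivial

theorem ale_bot {z : AbsDom X} (h : ale z .bot) : z = .bot := by
  cases z
  · rfl
  all_goals exact h.elim

theorem ale_val_cases {z : AbsDom X} {p : X} (h : ale z (.val p)) :
    z = .bot ∨ z = .val p := by
  cases z with
  | bot => exact Or.inl rfl
  | val q => exact Or.inr (congrArg _ h)
  | cross => exact h.elim
  | check => exact h.elim
  | top => exact h.elim

theorem alpha_empty (π : Heap L V → Option X) : alpha π (∅ : Set (Heap L V)) = .bot := by
  rw [alpha, if_pos rfl]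

theorem alpha_ne_bot {π : Heap L V → Option X} {C : Set (Heap L V)} (h : C ≠ ∅) :
    alpha π C ≠ .bot := by
  rw [alpha, if_neg h]
  split_ifs <;> intro hc <;> cases hc

theorem alpha_const {π : Heap L V → Option X} {C : Set (Heap L V)} {x : X}
    (hne : C.Nonempty) (hall : ∀ h ∈ C, π h = some x) : alpha π C = .val x := by
  have h1 : C ≠ ∅ := hne.ne_empty
  have hx : ∃ x, ∀ h ∈ C, π h = some x := ⟨x, hall⟩
  rw [alpha, if_neg h1, dif_pos hx]
  obtain ⟨h, hh⟩ := hne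
  have h2 := hx.choose_spec h hh
  rw [hall h hh] at h2
  exact congrArg AbsDom.val (Option.some_injective _ h2).symm

theorem alpha_val {π : Heap L V → Option X} {C : Set (Heap L V)} {x : X}
    (h : alpha π C = .val x) : C.Nonempty ∧ ∀ k ∈ C, π k = some x := by
  rw [alpha] at h
  split_ifs at h with h1 h2 h3 h4
  all_goals first
    | (injection h with h
       subst h
       exact ⟨Set.nonempty_iff_ne_empty.mpr h1, h2.choose_spec⟩)
    | exact absurd h (by intro hc; cases hc)

theorem alpha_le_check {π : Heap L V → Option X} {C : Set (Heap L V)}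
    (hall : ∀ h ∈ C, (π h).isSome) : ale (alpha π C) .check := by
  rw [alpha]
  split_ifs with h1 h2 h3 <;> first | trivial | exact absurd hall (by assumption)

/-! ### conjProj lemmas -/

theorem conjProj_eq {πA : Heap L V → Option X} {πB : Heap L V → Option Y}
    (hA : Locality πA) (hB : Locality πB) {h₁ h₂ h : Heap L V} {a : X} {b : Y}
    (hd : HDisj h₁ h₂) (he : hunion h₁ h₂ = h) (ha : πA h₁ = some a) (hb : πB h₂ = some b) :
    conjProj πA πB h = some (a, b) := by
  have hc : ∃ p : Heap L V × Heap L V,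
      HDisj p.1 p.2 ∧ hunion p.1 p.2 = h ∧ (πA p.1).isSome ∧ (πB p.2).isSome :=
    ⟨(h₁, h₂), hd, he, by rw [ha]; rfl, by rw [hb]; rfl⟩
  rw [conjProj, dif_pos hc]
  obtain ⟨hd', he', hsA, hsB⟩ := hc.choose_spec
  have e1 : πA hc.choose.1 = some a := by
    have l1 : πA (hunion hc.choose.1 hc.choose.2) = πA hc.choose.1 := hA _ _ hd' hsA
    have l2 : πA (hunion h₁ h₂) = πA h₁ := hA _ _ hd (by rw [ha]; rfl)
    rw [← l1, he', ← he, l2, ha]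
  have e2 : πB hc.choose.2 = some b := by
    have l1 : πB (hunion hc.choose.2 hc.choose.1) = πB hc.choose.2 := hB _ _ hd'.symm' hsB
    have l2 : πB (hunion h₂ h₁) = πB h₂ := hB _ _ hd.symm' (by rw [hb]; rfl)
    rw [← l1, hunion_comm hd'.symm', he', ← he, ← hunion_comm hd.symm', l2, hb]
  simp only [e1, e2, Option.get_some]

theorem conjProj_some {πA : Heap L V → Option X} {πB : Heap L V → Option Y}
    {h : Heap L V} {a : X} {b : Y}
    (hc : conjProj πA πB h = some (a, b)) :
    ∃ h₁ h₂, HDisj h₁ h₂ ∧ hunion h₁ h₂ = h ∧ πA h₁ = some a ∧ πB h₂ = some b := by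
  rw [conjProj] at hc
  split at hc
  case isTrue hex =>
    obtain ⟨hd, he, hsA, hsB⟩ := hex.choose_spec
    rw [Option.some.injEq, Prod.mk.injEq] at hc
    obtain ⟨hca, hcb⟩ := hc
    refine ⟨hex.choose.1, hex.choose.2, hd, he, ?_, ?_⟩
    · rw [← hca]; exact (Option.some_get hsA).symm
    · rw [← hcb]; exact (Option.some_get hsB).symm
  case isFalse => exact absurd hc (by simp)

/-! ### suff / foot lemmas -/

theorem mem_suff {f : Heap L V → Set (Heap L V)} {h : Heap L V} :
    h ∈ suff f ↔ f h ≠ ∅ := Iff.rfl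

theorem foot_resolve {f : Heap L V → Set (Heap L V)} {h : Heap L V}
    (hfoot : h ∈ foot f) (hns : h ∉ suff f) {h' : Heap L V} (hd : HDisj h h') :
    f (hunion h h') = ∅ := by
  rcases hfoot with hs | hn
  · exact absurd hs hns
  · have := hn h' hd
    rw [mem_suff, not_not] at this
    exact this

theorem suff_piece {πA : Heap L V → Option X} {f : Heap L V → Set (Heap L V)}
    (hf1 : purv πA ⊆ foot f) {h₁ h₂ : Heap L V}
    (h1p : h₁ ∈ purv πA) (hd : HDisj h₁ h₂) (hs : f (hunion h₁ h₂) ≠ ∅) : f h₁ ≠ ∅ := by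
  intro he
  exact hs (foot_resolve (hf1 h1p) (fun hc => hc he) hd)

/-! ### the core lemma -/

theorem core {πA : Heap L V → Option X}
    {f : Heap L V → Set (Heap L V)} (hf : LocalAction f) (hcap : CapturesProg πA f)
    {h₁ h₂ : Heap L V} (hd : HDisj h₁ h₂) (h1p : (πA h₁).isSome)
    (hs : f (hunion h₁ h₂) ≠ ∅) :
    ∃ x, alpha πA (f h₁) = .val x ∧
      ∀ k ∈ f (hunion h₁ h₂),
        HDisj (hsub k h₂) h₂ ∧ hunion (hsub k h₂) h₂ = k ∧ πA (hsub k h₂) = some x := by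
  have h1s : f h₁ ≠ ∅ := suff_piece hcap.1 h1p hd hs
  obtain ⟨x, hx⟩ := hcap.2.1 h₁ ⟨h1p, h1s⟩
  refine ⟨x, hx, ?_⟩
  have h3 := hcap.2.2 h₁ ⟨h1p, Or.inl h1s⟩ h₂ hd
  rw [hx] at h3
  have hall := (alpha_val h3).2
  intro k hk
  obtain ⟨r, hdr, hur⟩ := (hf h₁ h1s h₂ hd).2 k hk
  have hsubk : hsub k h₂ = r := by rw [← hur]; exact hsub_hunion hdr
  have hπ : πA (hsub k h₂) = some x := hall _ ⟨k, hk, rfl⟩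
  refine ⟨?_, ?_, hπ⟩
  · rw [hsubk]; exact hdr.symm'
  · rw [hsubk, hunion_comm hdr.symm']; exact hur

theorem sound_val {πA : Heap L V → Option X} {m : X → AbsDom X}
    {f : Heap L V → Set (Heap L V)} (hm : Sound πA m f) {h₁ : Heap L V} {a : X} {x : X}
    (ha : πA h₁ = some a) (hs : f h₁ ≠ ∅) (hx : alpha πA (f h₁) = .val x) :
    ale (AbsDom.val x) (mhat m (.val a)) := by
  have h0 : alpha πA {h₁} = .val a := by
    refine alpha_const ⟨h₁, rfl⟩ ?_
    intro k hk
    rw [Set.mem_singleton_iff] at hk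
    subst hk
    exact ha
  have h1 := hm.1 {h₁} (.val a) (by rw [h0]; exact rfl)
  have ht : tbar f {h₁} = f h₁ := by
    rw [tbar, if_pos]
    · simp
    · intro k hk
      rw [Set.mem_singleton_iff] at hk
      subst hk
      exact hs
  rw [ht, hx] at h1
  exact h1

end HC
end Aux

/-- abstract frame rule. -/
theorem abstract_frame {L V X Y : Type} [Countable L] [Infinite L]
    (πA : Heap L V → Option X) (πB : Heap L V → Option Y)
    (hA : Locality πA) (hB : Locality πB)
    (f : Heap L V → Set (Heap L V)) (hf : LocalAction f)
    (m : X → AbsDom X)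
    (hm : Sound πA m f) (hcap : CapturesProg πA f) :
    Sound (conjProj πA πB) (conjProg m (fun b : Y => AbsDom.val b)) f ∧
    CapturesProg (conjProj πA πB) f := by
  -- step lemma
  have step : ∀ (h : Heap L V) (a : X) (b : Y), conjProj πA πB h = some (a, b) → f h ≠ ∅ →
      ∃ x, ale (AbsDom.val x) (mhat m (AbsDom.val a)) ∧
        ∀ k ∈ f h, conjProj πA πB k = some (x, b) := by
    intro h a b hπ hs
    obtain ⟨h₁, h₂, hd, he, ha, hb⟩ := conjProj_some hπ
    have h1p : (πA h₁).isSome := by rw [ha]; rfl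
    rw [← he] at hs
    obtain ⟨x, hx, hk⟩ := core hf hcap hd h1p hs
    refine ⟨x, sound_val hm ha (suff_piece hcap.1 h1p hd hs) hx, ?_⟩
    intro k hkmem
    rw [← he] at hkmem
    obtain ⟨hdk, hek, hπk⟩ := hk k hkmem
    exact conjProj_eq hA hB hdk hek hπk hb
  -- capture condition (1)
  have cap1 : purv (conjProj πA πB) ⊆ foot f := by
    intro h hp
    obtain ⟨⟨a, b⟩, hπ⟩ := Option.isSome_iff_exists.mp hp
    obtain ⟨h₁, h₂, hd, he, ha, hb⟩ := conjProj_some hπ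
    have h1p : (πA h₁).isSome := by rw [ha]; rfl
    have h1f : h₁ ∈ foot f := hcap.1 h1p
    by_cases h1s : f h₁ = ∅
    · rw [foot, Set.mem_union]
      right
      intro h' hd'
      rw [← he, hdisj_hunion_left] at hd'
      have hd₁ : HDisj h₁ (hunion h₂ h') := hdisj_hunion_right.mpr ⟨hd, hd'.1⟩
      have heq : hunion h h' = hunion h₁ (hunion h₂ h') := by rw [← he, hunion_assoc]
      rw [mem_suff, heq, not_not]
      exact foot_resolve h1f (fun hc => hc h1s) hd₁
    · left
      rw [mem_suff, ← he]
      exact (hf h₁ h1s h₂ hd).1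
  constructor
  · constructor
    · -- soundness condition (1)
      intro C x hle
      cases x with
      | top => exact ale_top
      | check => exact ale_top
      | cross => exact ale_top
      | bot =>
        have hC : C = ∅ := by
          by_contra hne
          exact alpha_ne_bot hne (ale_bot hle)
        subst hC
        have ht : tbar f (∅ : Set (Heap L V)) = ∅ := by
          rw [tbar, if_pos (Set.empty_subset _)]
          simp
        rw [ht, alpha_empty]
        exact bot_ale
      | val p =>
        obtain ⟨a, b⟩ := p
        rcases ale_val_cases hle with hbot | hval
        · have hC : C = ∅ := by
            by_contra hne
            exact alpha_ne_bot hne hbot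
          subst hC
          have ht : tbar f (∅ : Set (Heap L V)) = ∅ := by
            rw [tbar, if_pos (Set.empty_subset _)]
            simp
          rw [ht, alpha_empty]
          exact bot_ale
        · obtain ⟨hne, hall⟩ := alpha_val hval
          by_cases hCs : C ⊆ suff f
          · have htb : tbar f C = ⋃ h ∈ C, f h := by rw [tbar, if_pos hCs]
            obtain ⟨h₀, h₀C⟩ := hne
            obtain ⟨x₀, hx₀le, _⟩ := step h₀ a b (hall h₀ h₀C) (hCs h₀C)
            rcases hma : m a with _ | _ | _ | _ | x
            · -- m a = bot : impossible
              rw [show mhat m (AbsDom.val a) = m a from rfl, hma] at hx₀le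
              exact hx₀le.elim
            · -- m a = cross : target is top
              have hM : mhat (conjProg m (fun b : Y => AbsDom.val b)) (AbsDom.val (a, b))
                  = .top := by
                show conjProg m (fun b : Y => AbsDom.val b) (a, b) = .top
                rw [conjProg]
                simp only [hma]
                try rfl
              rw [hM]
              exact ale_top
            · -- m a = check : target is check, all projections are some
              have hM : mhat (conjProg m (fun b : Y => AbsDom.val b)) (AbsDom.val (a, b))
                  = .check := by
                show conjProg m (fun b : Y => AbsDom.val b) (a, b) = .check
                rw [conjProg]
                simp only [hma]
                try rfl
              rw [hM]
              apply alpha_le_check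
              rw [htb]
              intro k hk
              rw [Set.mem_iUnion₂] at hk
              obtain ⟨h', h'C, hk⟩ := hk
              obtain ⟨x', _, hx'all⟩ := step h' a b (hall h' h'C) (hCs h'C)
              rw [hx'all k hk]
              rfl
            · -- m a = top
              have hM : mhat (conjProg m (fun b : Y => AbsDom.val b)) (AbsDom.val (a, b))
                  = .top := by
                show conjProg m (fun b : Y => AbsDom.val b) (a, b) = .top
                rw [conjProg]
                simp only [hma]
                try rfl
              rw [hM]
              exact ale_top
            · -- m a = val x
              have hM : mhat (conjProg m (fun b : Y => AbsDom.val b)) (AbsDom.val (a, b))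
                  = .val (x, b) := by
                show conjProg m (fun b : Y => AbsDom.val b) (a, b) = .val (x, b)
                rw [conjProg]
                simp only [hma]
                try rfl
              rw [hM]
              have hconst : ∀ k ∈ tbar f C, conjProj πA πB k = some (x, b) := by
                rw [htb]
                intro k hk
                rw [Set.mem_iUnion₂] at hk
                obtain ⟨h', h'C, hk⟩ := hk
                obtain ⟨x', hx'le, hx'all⟩ := step h' a b (hall h' h'C) (hCs h'C)
                rw [show mhat m (AbsDom.val a) = m a from rfl, hma] at hx'le
                have hxx : x' = x := hx'le
                subst hxx
                exact hx'all k hk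
              have hneU : (tbar f C).Nonempty := by
                rw [htb]
                obtain ⟨k, hk⟩ := Set.nonempty_iff_ne_empty.mpr (hCs h₀C)
                exact ⟨k, Set.mem_iUnion₂.mpr ⟨h₀, h₀C, hk⟩⟩
              rw [alpha_const hneU hconst]
              exact rfl
          · have ht : tbar f C = ∅ := by rw [tbar, if_neg hCs]
            rw [ht, alpha_empty]
            exact bot_ale
    · -- soundness condition (2)
      intro C hex hbot
      obtain ⟨⟨a, b⟩, hp⟩ := hex
      rw [hp]
      obtain ⟨hne, hall⟩ := alpha_val hp
      have htb : tbar f C = ∅ := by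
        by_contra hc
        exact alpha_ne_bot hc hbot
      have hex2 : ∃ h ∈ C, f h = ∅ := by
        by_contra hc
        push_neg at hc
        have hCs : C ⊆ suff f := fun h hh => (hc h hh).ne_empty
        rw [tbar, if_pos hCs] at htb
        obtain ⟨h₀, h₀C⟩ := hne
        obtain ⟨k, hk⟩ := hc h₀ h₀C
        have : k ∈ (∅ : Set (Heap L V)) := htb ▸ Set.mem_iUnion₂.mpr ⟨h₀, h₀C, hk⟩
        exact this
      obtain ⟨h, hC, hfh⟩ := hex2
      obtain ⟨h₁, h₂, hd, he, ha, hb⟩ := conjProj_some (hall h hC)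
      have h1ns : f h₁ = ∅ := by
        by_contra h1s
        have h2 := (hf h₁ h1s h₂ hd).1
        rw [he] at h2
        exact h2 hfh
      have hsA : alpha πA {h₁} = .val a := by
        refine alpha_const ⟨h₁, rfl⟩ ?_
        intro k hk
        rw [Set.mem_singleton_iff] at hk
        subst hk
        exact ha
      have htbA : tbar f {h₁} = ∅ := by
        rw [tbar, if_neg]
        intro hsub
        exact hsub rfl h1ns
      have hbotA := hm.2 {h₁} ⟨a, hsA⟩ (by rw [htbA]; exact alpha_empty _)
      rw [hsA] at hbotA
      have hma : m a = .bot := hbotA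
      show conjProg m (fun b : Y => AbsDom.val b) (a, b) = .bot
      rw [conjProg]
      simp only [hma]
      try rfl
  · refine ⟨cap1, ?_, ?_⟩
    · -- capture (2)
      intro h hmem
      obtain ⟨hp, hs⟩ := hmem
      obtain ⟨⟨a, b⟩, hπ⟩ := Option.isSome_iff_exists.mp hp
      obtain ⟨x, _, hall⟩ := step h a b hπ hs
      exact ⟨(x, b), alpha_const (Set.nonempty_iff_ne_empty.mpr hs) hall⟩
    · -- capture (3)
      intro h hmem h' hd'
      obtain ⟨hp, hft⟩ := hmem
      obtain ⟨⟨a, b⟩, hπ⟩ := Option.isSome_iff_exists.mp hp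
      by_cases hs : f h = ∅
      · have h0 : f (hunion h h') = ∅ := foot_resolve hft (fun hc => hc hs) hd'
        rw [hs, h0, Set.image_empty]
      · obtain ⟨h₁, h₂, hd, he, ha, hb⟩ := conjProj_some hπ
        have h1p : (πA h₁).isSome := by rw [ha]; rfl
        have hdsplit : HDisj h₁ h' ∧ HDisj h₂ h' := by
          rw [← he, hdisj_hunion_left] at hd'
          exact hd'
        have hdg : HDisj h₁ (hunion h₂ h') := hdisj_hunion_right.mpr ⟨hd, hdsplit.1⟩
        have heg : hunion h h' = hunion h₁ (hunion h₂ h') := by rw [← he, hunion_assoc]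
        rw [← he] at hs
        obtain ⟨x, hx, hk⟩ := core hf hcap hd h1p hs
        have hsg : f (hunion h₁ (hunion h₂ h')) ≠ ∅ := by
          have h1s : f h₁ ≠ ∅ := suff_piece hcap.1 h1p hd hs
          exact (hf h₁ h1s (hunion h₂ h') hdg).1
        obtain ⟨x', hx', hk'⟩ := core hf hcap hdg h1p hsg
        have hxx : x' = x := by
          rw [hx] at hx'
          injection hx' with hx'
          exact hx'.symm
        subst hxx
        have hRHS : alpha (conjProj πA πB) (f h) = .val (x', b) := by
          refine alpha_const (Set.nonempty_iff_ne_empty.mpr (by rw [← he]; exact hs)) ?_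
          intro k hkmem
          rw [← he] at hkmem
          obtain ⟨hdk, hek, hπk⟩ := hk k hkmem
          exact conjProj_eq hA hB hdk hek hπk hb
        have hLHS : alpha (conjProj πA πB)
            ((fun k => hsub k h') '' f (hunion h h')) = .val (x', b) := by
          refine alpha_const ?_ ?_
          · obtain ⟨k, hkmem⟩ := Set.nonempty_iff_ne_empty.mpr
                (show f (hunion h h') ≠ ∅ by rw [heg]; exact hsg)
            exact ⟨_, Set.mem_image_of_mem _ hkmem⟩
          · rintro k' ⟨k, hkmem, rfl⟩
            rw [heg] at hkmem
            obtain ⟨hdk, hek, hπk⟩ := hk' k hkmem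
            have hkeq : hunion (hunion h₂ h') (hsub k (hunion h₂ h')) = k := by
              rw [hunion_comm hdk.symm']
              exact hek
            have hsubeq : hsub k h' = hunion h₂ (hsub k (hunion h₂ h')) := by
              conv_lhs => rw [← hkeq]
              exact hsub_split hdsplit.2 hdk.symm'
            have hdrh₂ : HDisj (hsub k (hunion h₂ h')) h₂ :=
              (hdisj_hunion_right.mp hdk).1
            refine conjProj_eq hA hB hdrh₂ ?_ hπk hb
            show hunion (hsub k (hunion h₂ h')) h₂ = hsub k h'
            rw [hsubeq, hunion_comm hdrh₂]
        rw [hRHS, hLHS]
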